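/- For each k with 1 ≤ k ≤ n−1, the set {a ∈ T_n : rank(a) ≤ k} is a two-sided ideal of T_n and is generated as a semigroup by its own idempotents. (Howie's theorem: every ideal of the singular part I_n of T_n is generated by its idempotents.) -/

import Mathlib

/-- The full transformation monoid on `{1,...,n}`, modeled as `Function.End (Fin n)`
(multiplication is composition). -/
abbrev Tn (n : ℕ) := Function.End (Fin n)

/-- A permutation viewed as a transformation. -/
def ofPerm {n : ℕ} (g : Equiv.Perm (Fin n)) : Tn n := ⇑g

/-- The rank of a transformation: the size of its image. -/
def rnk {n : ℕ} (a : Tn n) : ℕ := (Finset.univ.image a).card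

/-- The symmetric group embedded in `Tn n` as a set. -/
def perms (n : ℕ) : Set (Tn n) := Set.range (fun g : Equiv.Perm (Fin n) => ofPerm g)

/-- The `S_n`-conjugacy class of a transformation. -/
def conjClass {n : ℕ} (t : Tn n) : Set (Tn n) :=
  {s | ∃ g : Equiv.Perm (Fin n), s = ofPerm g⁻¹ * t * ofPerm g}

open Finset

namespace HowieAux

lemma end_mul_apply {γ : Type*} (f g : Function.End γ) (x : γ) : (f * g) x = f (g x) := rfl

/-- The idempotent sending `u` to `v` and fixing everything else. -/
def pt {m : ℕ} (u v : Fin m) : Function.End (Fin m) := fun x => if x = u then v else x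

lemma pt_self {m : ℕ} (u v : Fin m) : pt u v u = v := if_pos rfl

lemma pt_ne {m : ℕ} {u x : Fin m} (v : Fin m) (h : x ≠ u) : pt u v x = x := if_neg h

lemma pt_gen {m : ℕ} {u v : Fin m} (h : v ≠ u) :
    ¬ Function.Surjective (pt u v) ∧ pt u v * pt u v = pt u v := by
  constructor
  · intro hs
    obtain ⟨x, hx⟩ := hs u
    by_cases hxu : x = u
    · rw [hxu, pt_self] at hx; exact h hx
    · rw [pt_ne v hxu] at hx; exact hxu hx
  · funext x
    rw [end_mul_apply]
    by_cases hxu : x = u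
    · rw [hxu, pt_self, pt_ne v h]
    · rw [pt_ne v hxu, pt_ne v hxu]

instance endMovedDecPred {m : ℕ} (δ : Function.End (Fin m)) :
    DecidablePred fun i : Fin m => δ i ≠ i := fun _ => inferInstance

/-- Classical Howie theorem: every non-surjective map on `Fin m` is a product of
non-surjective idempotents. -/
lemma howie (m : ℕ) :
    ∀ N (δ : Function.End (Fin m)), (Finset.univ.filter fun i => δ i ≠ i).card ≤ N →
    ¬ Function.Surjective δ →
    δ ∈ Subsemigroup.closure {x : Function.End (Fin m) | ¬ Function.Surjective x ∧ x * x = x} := by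
  intro N
  induction N with
  | zero =>
    intro δ hcard hns
    exfalso
    apply hns
    have hid : δ = id := by
      funext x
      by_contra hx
      have : x ∈ Finset.univ.filter fun i => δ i ≠ i := by
        simp only [mem_filter, mem_univ, true_and]; exact hx
      have := card_pos.mpr ⟨x, this⟩
      omega
    rw [hid]; exact Function.surjective_id
  | succ N ih =>
    intro δ hcard hns
    -- get a point outside the range
    unfold Function.Surjective at hns
    push_neg at hns
    obtain ⟨z, hz'⟩ := hns
    have hzz : δ z ≠ z := hz' z
    have hzmoved : z ∈ Finset.univ.filter fun i => δ i ≠ i := by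
      simp only [mem_filter, mem_univ, true_and]; exact hzz
    by_cases hc : ∃ y, y ≠ z ∧ δ y = δ z ∧ δ y ≠ y
    · -- case 2: collision partner y that is moved
      obtain ⟨y, hyz, hyδ, hymoved⟩ := hc
      set β : Function.End (Fin m) :=
        (fun x => if x = y then y else if x = z then δ z else δ x) with hβ
      have hβapp : ∀ x, x ≠ y → x ≠ z → β x = δ x := by
        intro x h1 h2; show (if x = y then y else if x = z then δ z else δ x) = δ x
        rw [if_neg h1, if_neg h2]
      have hβy : β y = y := by
        show (if y = y then y else if y = z then δ z else δ y) = y; rw [if_pos rfl]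
      have hβz : β z = δ z := by
        show (if z = y then y else if z = z then δ z else δ z) = δ z
        rw [if_neg (Ne.symm hyz), if_pos rfl]
      have hβns : ¬ Function.Surjective β := by
        intro hs
        obtain ⟨x, hx⟩ := hs z
        by_cases h1 : x = y
        · rw [h1, hβy] at hx; exact hyz hx
        · by_cases h2 : x = z
          · rw [h2, hβz] at hx; exact hzz hx
          · rw [hβapp x h1 h2] at hx; exact hz' x hx
      have hβcard : (Finset.univ.filter fun i => β i ≠ i).card ≤ N := by
        have hsub : (Finset.univ.filter fun i => β i ≠ i) ⊆
            (Finset.univ.filter fun i => δ i ≠ i).erase y := by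
          intro x hx
          simp only [mem_filter, mem_univ, true_and] at hx
          rcases eq_or_ne x y with h1 | h1
          · exact absurd (h1 ▸ hβy) hx
          · rw [mem_erase]
            refine ⟨h1, ?_⟩
            simp only [mem_filter, mem_univ, true_and]
            rcases eq_or_ne x z with h2 | h2
            · subst h2; exact hzz
            · rw [hβapp x h1 h2] at hx; exact hx
        have hy' : y ∈ Finset.univ.filter fun i => δ i ≠ i := by
          simp only [mem_filter, mem_univ, true_and]; exact hymoved
        have := card_le_card hsub
        rw [card_erase_of_mem hy'] at this
        omega
      have hdec : δ = β * pt y z := by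
        funext x
        rw [end_mul_apply]
        by_cases h1 : x = y
        · rw [h1, pt_self, hβz, hyδ]
        · rw [pt_ne z h1]
          rcases eq_or_ne x z with h2 | h2
          · rw [h2, hβz]
          · rw [hβapp x h1 h2]
      rw [hdec]
      exact mul_mem (ih β hβcard hβns)
        (Subsemigroup.subset_closure (pt_gen (Ne.symm hyz)))
    · by_cases hc2 : ∃ y, y ≠ z ∧ δ y = δ z
      · -- case: collision partner, but every such partner is fixed
        obtain ⟨y, hyz, hyδ⟩ := hc2
        have hyfix : δ y = y := by
          by_contra h
          exact hc ⟨y, hyz, hyδ, h⟩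
        have hδz : δ z = y := by rw [← hyδ, hyfix]
        by_cases ha : ∃ a, a ≠ z ∧ δ a ≠ a
        · obtain ⟨a, haz, hamoved⟩ := ha
          have hay : a ≠ y := fun h => hamoved (h ▸ hyfix)
          set β : Function.End (Fin m) :=
            (fun x => if x = a then a else if x = z then δ a else δ x) with hβ
          have hβapp : ∀ x, x ≠ a → x ≠ z → β x = δ x := by
            intro x h1 h2; show (if x = a then a else if x = z then δ a else δ x) = δ x
            rw [if_neg h1, if_neg h2]
          have hβa : β a = a := by
            show (if a = a then a else if a = z then δ a else δ a) = a; rw [if_pos rfl]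
          have hβz : β z = δ a := by
            show (if z = a then a else if z = z then δ a else δ z) = δ a
            rw [if_neg (Ne.symm haz), if_pos rfl]
          have hβns : ¬ Function.Surjective β := by
            intro hs
            obtain ⟨x, hx⟩ := hs z
            by_cases h1 : x = a
            · rw [h1, hβa] at hx; exact haz hx
            · by_cases h2 : x = z
              · rw [h2, hβz] at hx; exact hz' a hx
              · rw [hβapp x h1 h2] at hx; exact hz' x hx
          have hβcard : (Finset.univ.filter fun i => β i ≠ i).card ≤ N := by
            have hsub : (Finset.univ.filter fun i => β i ≠ i) ⊆
                (Finset.univ.filter fun i => δ i ≠ i).erase a := by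
              intro x hx
              simp only [mem_filter, mem_univ, true_and] at hx
              rcases eq_or_ne x a with h1 | h1
              · exact absurd (h1 ▸ hβa) hx
              · rw [mem_erase]
                refine ⟨h1, ?_⟩
                simp only [mem_filter, mem_univ, true_and]
                rcases eq_or_ne x z with h2 | h2
                · subst h2; exact hzz
                · rw [hβapp x h1 h2] at hx; exact hx
            have ha' : a ∈ Finset.univ.filter fun i => δ i ≠ i := by
              simp only [mem_filter, mem_univ, true_and]; exact hamoved
            have := card_le_card hsub
            rw [card_erase_of_mem ha'] at this
            omega
          have hdec : δ = β * pt a z * pt z y := by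
            funext x
            rw [end_mul_apply, end_mul_apply]
            rcases eq_or_ne x z with h1 | h1
            · rw [h1, pt_self, pt_ne z (Ne.symm hay), hβapp y (Ne.symm hay) hyz, hyfix, hδz]
            · rw [pt_ne y h1]
              rcases eq_or_ne x a with h2 | h2
              · rw [h2, pt_self, hβz]
              · rw [pt_ne z h2, hβapp x h2 h1]
          rw [hdec]
          refine mul_mem (mul_mem (ih β hβcard hβns) ?_) ?_
          · exact Subsemigroup.subset_closure (pt_gen (Ne.symm haz))
          · exact Subsemigroup.subset_closure (pt_gen hyz)
        · -- only z is moved: δ is itself an idempotent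
          push_neg at ha
          have hδpt : δ = pt z y := by
            funext x
            rcases eq_or_ne x z with h1 | h1
            · rw [h1, pt_self]; exact hδz
            · rw [pt_ne y h1]; exact ha x h1
          rw [hδpt]
          exact Subsemigroup.subset_closure (pt_gen hyz)
      · -- no collision partner for z
        push_neg at hc2
        set β : Function.End (Fin m) := (fun x => if x = z then z else δ x) with hβ
        have hβz : β z = z := by
          show (if z = z then z else δ z) = z; rw [if_pos rfl]
        have hβapp : ∀ x, x ≠ z → β x = δ x := by
          intro x h1; show (if x = z then z else δ x) = δ x; rw [if_neg h1]
        have hβns : ¬ Function.Surjective β := by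
          intro hs
          obtain ⟨x, hx⟩ := hs (δ z)
          rcases eq_or_ne x z with h1 | h1
          · rw [h1, hβz] at hx; exact hzz hx.symm
          · rw [hβapp x h1] at hx; exact hc2 x h1 hx
        have hβcard : (Finset.univ.filter fun i => β i ≠ i).card ≤ N := by
          have hsub : (Finset.univ.filter fun i => β i ≠ i) ⊆
              (Finset.univ.filter fun i => δ i ≠ i).erase z := by
            intro x hx
            simp only [mem_filter, mem_univ, true_and] at hx
            rcases eq_or_ne x z with h1 | h1
            · exact absurd (h1 ▸ hβz) hx
            · rw [mem_erase]
              refine ⟨h1, ?_⟩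
              simp only [mem_filter, mem_univ, true_and]
              rw [hβapp x h1] at hx; exact hx
          have := card_le_card hsub
          rw [card_erase_of_mem hzmoved] at this
          omega
        have hdec : δ = pt z (δ z) * β := by
          funext x
          rw [end_mul_apply]
          rcases eq_or_ne x z with h1 | h1
          · rw [h1, hβz, pt_self]
          · rw [hβapp x h1, pt_ne (δ z) (hz' x)]
        rw [hdec]
        exact mul_mem (Subsemigroup.subset_closure (pt_gen hzz)) (ih β hβcard hβns)




lemma rnk_mul_le_left {n : ℕ} (t a : Tn n) : rnk (t * a) ≤ rnk a := by
  unfold rnk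
  have : Finset.univ.image (t * a) = (Finset.univ.image a).image t := by
    exact image_image.symm
  rw [this]
  exact card_image_le

lemma rnk_mul_le_right {n : ℕ} (a t : Tn n) : rnk (a * t) ≤ rnk a := by
  unfold rnk
  apply card_le_card
  intro y hy
  replace hy := mem_image.mp hy
  obtain ⟨x, -, hx⟩ := hy
  exact mem_image.mpr ⟨t x, mem_univ _, hx⟩

-- main generation lemma
lemma gen {n k : ℕ} (hk1 : 1 ≤ k) (hk2 : k ≤ n - 1) (hn : 2 ≤ n) (α : Tn n)
    (hα : rnk α ≤ k) :
    α ∈ Subsemigroup.closure {e : Tn n | rnk e ≤ k ∧ e * e = e} := by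
  classical
  have hkn : k + 1 ≤ n := by omega
  set B : Finset (Fin n) := Finset.univ.image α with hB
  have hBk : B.card ≤ k := hα
  have hBne : B.Nonempty := by
    refine ⟨α ⟨0, by omega⟩, ?_⟩
    exact mem_image.mpr ⟨_, mem_univ _, rfl⟩
  obtain ⟨b₀, hb₀⟩ := hBne
  have hmemB : ∀ x, α x ∈ B := fun x => mem_image.mpr ⟨x, mem_univ _, rfl⟩
  -- section s of α on B
  set s : Fin n → Fin n := fun b => if h : ∃ a, α a = b then h.choose else b with hs
  have hsec : ∀ b ∈ B, α (s b) = b := by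
    intro b hb
    rw [hB] at hb; replace hb := mem_image.mp hb
    obtain ⟨a, -, ha⟩ := hb
    have hex : ∃ a, α a = b := ⟨a, ha⟩
    simp only [hs, dif_pos hex]
    exact hex.choose_spec
  set T : Finset (Fin n) := B.image s with hT
  have hTcard : T.card ≤ k + 1 := le_trans (le_trans card_image_le hBk) (by omega)
  obtain ⟨M, hTM, hMcard⟩ := Finset.exists_superset_card_eq hTcard (by simpa using hkn)
  -- the equivalence M ≃ Fin (k+1)
  set E : {x // x ∈ M} ≃ Fin (k + 1) := Finset.equivFinOfCardEq hMcard with hE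
  set e : Fin (k + 1) → Fin n := fun j => (E.symm j : Fin n) with he
  set p : Fin n → Fin (k + 1) := fun x => if h : x ∈ M then E ⟨x, h⟩ else 0 with hp
  have hpe : ∀ j, p (e j) = j := by
    intro j
    have hmem : (E.symm j : Fin n) ∈ M := (E.symm j).2
    simp only [hp, he, dif_pos hmem]
    rw [Subtype.coe_eta, Equiv.apply_symm_apply]
  have hep : ∀ x (h : x ∈ M), e (p x) = x := by
    intro x h
    simp only [hp, he, dif_pos h, Equiv.symm_apply_apply]
  -- injection from B \ M into M \ B
  have hcardle : Fintype.card ↑(B \ M) ≤ Fintype.card ↑(M \ B) := by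
    rw [Fintype.card_coe, Fintype.card_coe]
    have h1 := card_sdiff_add_card_inter B M
    have h2 := card_sdiff_add_card_inter M B
    rw [inter_comm M B] at h2
    omega
  obtain ⟨J⟩ := Function.Embedding.nonempty_of_card_le hcardle
  set u : Fin n → Fin n := fun x => if h : x ∈ B \ M then (J ⟨x, h⟩ : Fin n) else x with hu
  have huM : ∀ b ∈ B, u b ∈ M := by
    intro b hb
    by_cases h : b ∈ B \ M
    · simp only [hu, dif_pos h]
      exact (mem_sdiff.mp (J ⟨b, h⟩).2).1
    · simp only [hu, dif_neg h]
      by_contra hbM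
      exact h (mem_sdiff.mpr ⟨hb, hbM⟩)
  have huBM : ∀ b ∈ B, b ∈ M → u b = b := by
    intro b hb hbM
    have : b ∉ B \ M := fun h => (mem_sdiff.mp h).2 hbM
    simp only [hu, dif_neg this]
  have huNB : ∀ b ∈ B, b ∉ M → u b ∉ B := by
    intro b hb hbM
    have h : b ∈ B \ M := mem_sdiff.mpr ⟨hb, hbM⟩
    simp only [hu, dif_pos h]
    exact (mem_sdiff.mp (J ⟨b, h⟩).2).2
  have huinj : ∀ b₁ ∈ B, ∀ b₂ ∈ B, u b₁ = u b₂ → b₁ = b₂ := by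
    intro b₁ h1 b₂ h2 heq
    by_cases c1 : b₁ ∈ B \ M <;> by_cases c2 : b₂ ∈ B \ M
    · simp only [hu, dif_pos c1, dif_pos c2] at heq
      have := J.injective (Subtype.ext heq)
      exact congrArg Subtype.val this
    · exfalso
      simp only [hu, dif_pos c1, dif_neg c2] at heq
      have : b₂ ∈ M := by
        by_contra h; exact c2 (mem_sdiff.mpr ⟨h2, h⟩)
      have hb2 : b₂ ∈ B := h2
      have := (mem_sdiff.mp (J ⟨b₁, c1⟩).2).2
      rw [heq] at this
      exact this hb2
    · exfalso
      simp only [hu, dif_neg c1, dif_pos c2] at heq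
      have := (mem_sdiff.mp (J ⟨b₂, c2⟩).2).2
      rw [← heq] at this
      exact this h1
    · simp only [hu, dif_neg c1, dif_neg c2] at heq
      exact heq
  -- the idempotent q
  set q : Tn n := fun x => if h : ∃ b, b ∈ B ∧ u b = x then h.choose
    else if x ∈ B then x else b₀ with hq
  have hqu : ∀ b ∈ B, q (u b) = b := by
    intro b hb
    have hex : ∃ c, c ∈ B ∧ u c = u b := ⟨b, hb, rfl⟩
    simp only [hq, dif_pos hex]
    obtain ⟨hc1, hc2⟩ := hex.choose_spec
    exact huinj _ hc1 _ hb hc2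
  have hqB : ∀ b ∈ B, q b = b := by
    intro b hb
    by_cases hex : ∃ c, c ∈ B ∧ u c = b
    · simp only [hq, dif_pos hex]
      obtain ⟨hc1, hc2⟩ := hex.choose_spec
      set c := hex.choose
      by_cases hcM : c ∈ M
      · rw [huBM c hc1 hcM] at hc2; exact hc2
      · exfalso
        have hnb := huNB c hc1 hcM
        rw [hc2] at hnb
        exact hnb hb
    · simp only [hq, dif_neg hex, if_pos hb]
  have hqmem : ∀ x, q x ∈ B := by
    intro x
    by_cases hex : ∃ c, c ∈ B ∧ u c = x
    · simp only [hq, dif_pos hex]; exact hex.choose_spec.1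
    · simp only [hq, dif_neg hex]
      by_cases hxB : x ∈ B
      · rw [if_pos hxB]; exact hxB
      · rw [if_neg hxB]; exact hb₀
  have hqidem : q * q = q := by
    funext x
    rw [end_mul_apply]
    exact hqB _ (hqmem x)
  have hqrnk : rnk q ≤ k := by
    unfold rnk
    refine le_trans (card_le_card ?_) hBk
    intro y hy
    replace hy := mem_image.mp hy
    obtain ⟨x, -, hx⟩ := hy
    exact hx ▸ hqmem x
  -- the idempotent ε
  set ε : Tn n := fun x => s (α x) with hε
  have hεidem : ε * ε = ε := by
    funext x
    rw [end_mul_apply]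
    show s (α (s (α x))) = s (α x)
    rw [hsec _ (hmemB x)]
  have hεrnk : rnk ε ≤ k := by
    unfold rnk
    have hsub : Finset.univ.image ε ⊆ T := by
      intro y hy
      replace hy := mem_image.mp hy
      obtain ⟨x, -, hx⟩ := hy
      rw [hT, mem_image]
      exact ⟨α x, hmemB x, hx⟩
    exact le_trans (card_le_card hsub) (le_trans card_image_le hBk)
  -- the map δ on Fin (k+1) and its lift
  set δ : Function.End (Fin (k + 1)) := fun j => p (u (α (e j))) with hδ
  have hδns : ¬ Function.Surjective δ := by
    intro hsurj
    have himg : (Finset.univ : Finset (Fin (k + 1))) ⊆ Finset.univ.image δ := by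
      intro y _
      obtain ⟨x, hx⟩ := hsurj y
      exact mem_image.mpr ⟨x, mem_univ _, hx⟩
    have h1 : (Finset.univ.image δ).card ≤ B.card := by
      have : Finset.univ.image δ = (Finset.univ.image fun j => α (e j)).image
          (fun x => p (u x)) := by
        exact (image_image (s := univ) (f := fun j => α (e j)) (g := fun x => p (u x))).symm
      rw [this]
      refine le_trans card_image_le (card_le_card ?_)
      intro y hy
      replace hy := mem_image.mp hy
      obtain ⟨x, -, hx⟩ := hy
      exact hx ▸ hmemB (e x)
    have h2 := card_le_card himg
    rw [card_univ, Fintype.card_fin] at h2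
    omega
  have hδmem := howie (k + 1) (Finset.univ.filter fun i => δ i ≠ i).card δ le_rfl hδns
  -- the multiplicative hom lifting End (Fin (k+1)) to Tn n
  set φ : Function.End (Fin (k + 1)) →ₙ* Tn n :=
    { toFun := fun f => (fun x => e (f (p x)) : Tn n),
      map_mul' := by
        intro f g
        funext x
        show e ((f * g) (p x)) = e (f (p (e (g (p x)))))
        rw [end_mul_apply, hpe] } with hφ
  have hφδ : φ δ ∈ Subsemigroup.closure {e : Tn n | rnk e ≤ k ∧ e * e = e} := by
    refine Subsemigroup.closure_induction
      (fun x hx => ?_) (fun x y _ _ hx hy => by rw [map_mul]; exact mul_mem hx hy) hδmem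
    obtain ⟨hxns, hxidem⟩ := hx
    refine Subsemigroup.subset_closure ⟨?_, ?_⟩
    · -- rnk (φ x) ≤ k
      unfold rnk
      have himg : Finset.univ.image (φ x) =
          ((Finset.univ.image fun y => x (p y)).image e) := by
        exact (image_image (s := univ) (f := fun y => x (p y)) (g := e)).symm
      rw [himg]
      have h1 : (Finset.univ.image fun y => x (p y)) ⊆ Finset.univ.image x := by
        intro w hw
        replace hw := mem_image.mp hw
        obtain ⟨v, -, hv⟩ := hw
        exact mem_image.mpr ⟨p v, mem_univ _, hv⟩
      have h2 : (Finset.univ.image x).card < k + 1 := by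
        have hne : Finset.univ.image x ≠ Finset.univ := by
          intro hcontra
          apply hxns
          intro y
          have : y ∈ Finset.univ.image x := by rw [hcontra]; exact mem_univ y
          replace this := mem_image.mp this
          obtain ⟨v, -, hv⟩ := this
          exact ⟨v, hv⟩
        have := card_lt_card (ssubset_of_subset_of_ne (subset_univ _) hne)
        rwa [card_univ, Fintype.card_fin] at this
      calc ((Finset.univ.image fun y => x (p y)).image e).card
          ≤ (Finset.univ.image fun y => x (p y)).card := card_image_le
        _ ≤ (Finset.univ.image x).card := card_le_card h1
        _ ≤ k := by omega
    · rw [← map_mul, hxidem]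
  -- the key factorization
  have hfact : α = q * (φ δ) * ε := by
    funext x
    rw [end_mul_apply, end_mul_apply]
    show α x = q (e (δ (p (s (α x)))))
    have hbx : α x ∈ B := hmemB x
    have hsM : s (α x) ∈ M := hTM (mem_image.mpr ⟨α x, hbx, rfl⟩)
    rw [show δ (p (s (α x))) = p (u (α (e (p (s (α x)))))) from rfl]
    rw [hep _ hsM, hsec _ hbx, hep _ (huM _ hbx), hqu _ hbx]
  rw [hfact]
  exact mul_mem (mul_mem (Subsemigroup.subset_closure ⟨hqrnk, hqidem⟩) hφδ)
    (Subsemigroup.subset_closure ⟨hεrnk, hεidem⟩)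

end HowieAux

/-- Howie's theorem: each `{a : rank a ≤ k}` (`1 ≤ k ≤ n-1`) is a two-sided ideal of `T_n`
and is generated as a semigroup by its own idempotents. -/
theorem stmt6 (n k : ℕ) (hk1 : 1 ≤ k) (hk2 : k ≤ n - 1) :
    (∀ a : Tn n, rnk a ≤ k → ∀ t : Tn n, rnk (t * a) ≤ k ∧ rnk (a * t) ≤ k) ∧
    {a : Tn n | rnk a ≤ k} =
      ↑(Subsemigroup.closure {e : Tn n | rnk e ≤ k ∧ e * e = e}) := by
  have hn : 2 ≤ n := by omega
  constructor
  · intro a ha t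
    exact ⟨le_trans (HowieAux.rnk_mul_le_left t a) ha,
      le_trans (HowieAux.rnk_mul_le_right a t) ha⟩
  · ext a
    simp only [Set.mem_setOf_eq, SetLike.mem_coe]
    constructor
    · intro ha
      exact HowieAux.gen hk1 hk2 hn a ha
    · intro ha
      exact Subsemigroup.closure_induction (fun x hx => hx.1)
        (fun x y _ _ hx _ => le_trans (HowieAux.rnk_mul_le_right x y) hx) ha
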